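/- Let (λ_n) be a nondecreasing sequence of positive reals with heat trace expansion ∑_n e^{-tλ_n} = ∑_{i=0}^k c_i t^{-s_i} + O(t^{-s_{k+1}}) as t → 0⁺. Define ζ(s) = ∑_n λ_n^{-s} for Re s > s_0. Then Γ(s)ζ(s) = ∫_0^∞ t^{s-1} (∑_n e^{-tλ_n}) dt for Re s > s_0, and Γ(s)ζ(s) extends meromorphically to Re s > s_{k+1} with simple poles exactly at those s_i with c_i ≠ 0, with residues Res_{s=s_i} Γ(s)ζ(s) = c_i. -/

import Mathlib

open MeasureTheory Filter Asymptotics Set Real Topology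

theorem spectral_zeta_mellin_and_continuation
    (k : ℕ) (s : Fin (k + 2) → ℝ) (hs : ∀ i j : Fin (k + 2), i < j → s j < s i)
    (c : Fin (k + 1) → ℝ)
    (lam : ℕ → ℝ) (hlam_mono : Monotone lam) (hlam_pos : ∀ n, 0 < lam n)
    (hsum : ∀ t : ℝ, 0 < t → Summable fun n => Real.exp (-(t * lam n)))
    (htrace : (fun t : ℝ =>
        (∑' n, Real.exp (-(t * lam n))) -
          ∑ i : Fin (k + 1), c i * t ^ (-(s i.castSucc)))
        =O[𝓝[>] (0 : ℝ)] fun t : ℝ => t ^ (-(s (Fin.last (k + 1)))))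
    (zeta : ℂ → ℂ)
    (hzeta : ∀ z : ℂ, (s 0 : ℝ) < z.re → zeta z = ∑' n, (lam n : ℂ) ^ (-z)) :
    (∀ z : ℂ, (s 0 : ℝ) < z.re →
        Complex.Gamma z * zeta z =
          ∫ t in Set.Ioi (0 : ℝ),
            (t : ℂ) ^ (z - 1) * ((∑' n, Real.exp (-(t * lam n)) : ℝ) : ℂ)) ∧
    ∃ G : ℂ → ℂ, AnalyticOn ℂ G {z : ℂ | (s (Fin.last (k + 1)) : ℝ) < z.re} ∧
      ∀ z : ℂ, (s 0 : ℝ) < z.re →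
        Complex.Gamma z * zeta z =
          G z + ∑ i : Fin (k + 1), (c i : ℂ) / (z - (s i.castSucc : ℝ)) := by
  set Fr : ℝ → ℝ := fun t => ∑' n, Real.exp (-(t * lam n)) with hFr_def
  set F : ℝ → ℂ := fun t => ((Fr t : ℝ) : ℂ) with hF_def
  set sk : ℝ := s (Fin.last (k + 1)) with hsk_def
  -- basic inequalities on exponents
  have hsi_le : ∀ i : Fin (k + 1), s i.castSucc ≤ s 0 := by
    intro i
    rcases eq_or_ne i.castSucc 0 with h | h
    · rw [h]
    · exact (hs 0 i.castSucc (Fin.pos_of_ne_zero h)).le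
  have hsk_lt_si : ∀ i : Fin (k + 1), sk < s i.castSucc := by
    intro i
    exact hs i.castSucc (Fin.last (k + 1)) (Fin.castSucc_lt_last i)
  have hsk_lt_s0 : sk < s 0 := lt_of_lt_of_le (hsk_lt_si 0) (hsi_le 0)
  -- nonnegativity
  have hFr_nonneg : ∀ t : ℝ, 0 ≤ Fr t := fun t =>
    tsum_nonneg fun n => (Real.exp_pos _).le
  -- continuity of Fr on Ioi 0
  have hFr_cont : ContinuousOn Fr (Ioi 0) := by
    intro t0 ht0
    have h2 : (0 : ℝ) < t0 / 2 := by simpa using half_pos (show (0:ℝ) < t0 from ht0)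
    have hco : ContinuousOn Fr (Ici (t0 / 2)) := by
      refine continuousOn_tsum (fun n => (Continuous.continuousOn (by continuity)))
        (hsum _ h2) (fun n t ht => ?_)
      rw [Real.norm_eq_abs, Real.abs_exp]
      exact Real.exp_le_exp.mpr
        (neg_le_neg (mul_le_mul_of_nonneg_right ht (hlam_pos n).le))
    exact (hco.continuousAt (Ici_mem_nhds (by linarith))).continuousWithinAt
  have hF_cont : ContinuousOn F (Ioi 0) :=
    Complex.continuous_ofReal.comp_continuousOn hFr_cont
  -- exponential decay at infinity
  have hFr_top : Fr =O[atTop] fun t : ℝ => Real.exp (-(lam 0) * t) := by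
    rw [isBigO_iff]
    refine ⟨Fr 1 * Real.exp (lam 0), ?_⟩
    filter_upwards [eventually_ge_atTop (1 : ℝ)] with t ht
    have ht0 : (0 : ℝ) < t := lt_of_lt_of_le one_pos ht
    have key : ∀ n, Real.exp (-(t * lam n)) ≤
        Real.exp (-(lam 0) * (t - 1)) * Real.exp (-(1 * lam n)) := by
      intro n
      rw [← Real.exp_add]
      apply Real.exp_le_exp.mpr
      have h0n : lam 0 ≤ lam n := hlam_mono (Nat.zero_le n)
      nlinarith [hlam_pos 0, hlam_pos n]
    have hb : Fr t ≤ Real.exp (-(lam 0) * (t - 1)) * Fr 1 := by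
      have := Summable.tsum_le_tsum key (hsum t ht0) ((hsum 1 one_pos).mul_left _)
      simpa [tsum_mul_left, hFr_def, neg_mul] using this
    have he : Real.exp (-(lam 0) * (t - 1)) = Real.exp (lam 0) * Real.exp (-(lam 0) * t) := by
      rw [← Real.exp_add]; ring_nf
    rw [Real.norm_eq_abs, abs_of_nonneg (hFr_nonneg t), Real.norm_eq_abs, Real.abs_exp]
    calc Fr t ≤ Real.exp (-(lam 0) * (t - 1)) * Fr 1 := hb
      _ = Fr 1 * Real.exp (lam 0) * Real.exp (-(lam 0) * t) := by rw [he]; ring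
  have hF_top : F =O[atTop] fun t : ℝ => Real.exp (-(lam 0) * t) := by
    have : (fun t => ‖F t‖) = fun t => ‖Fr t‖ := by
      funext t; simp [hF_def, Complex.norm_real]
    rw [← isBigO_norm_left, this, isBigO_norm_left]
    exact hFr_top
  -- power comparisons near zero
  have hpow_cmp : ∀ a b : ℝ, a ≤ b → (fun t : ℝ => t ^ (-a)) =O[𝓝[>] (0:ℝ)]
      fun t : ℝ => t ^ (-b) := by
    intro a b hab
    rw [isBigO_iff]
    refine ⟨1, ?_⟩
    filter_upwards [Ioc_mem_nhdsGT (zero_lt_one)] with t ht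
    rw [one_mul, Real.norm_eq_abs, Real.norm_eq_abs,
      abs_of_nonneg (Real.rpow_nonneg ht.1.le _), abs_of_nonneg (Real.rpow_nonneg ht.1.le _)]
    exact Real.rpow_le_rpow_of_exponent_ge ht.1 ht.2 (neg_le_neg hab)
  have hP_bigO : (fun t : ℝ => ∑ i : Fin (k+1), c i * t ^ (-(s i.castSucc)))
      =O[𝓝[>] (0:ℝ)] fun t : ℝ => t ^ (-(s 0)) := by
    refine IsBigO.fun_sum (fun i _ => ?_)
    exact (IsBigO.const_mul_left (hpow_cmp _ _ (hsi_le i)) _)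
  have hFr_bot : Fr =O[𝓝[>] (0:ℝ)] fun t : ℝ => t ^ (-(s 0)) := by
    have h1 := (htrace.trans (hpow_cmp _ _ hsk_lt_s0.le)).add hP_bigO
    have : (fun t : ℝ => ((∑' n, Real.exp (-(t * lam n))) -
        ∑ i : Fin (k + 1), c i * t ^ (-(s i.castSucc))) +
        ∑ i : Fin (k+1), c i * t ^ (-(s i.castSucc))) = Fr := by
      funext t; simp [hFr_def]
    rwa [this] at h1
  have hF_bot : F =O[𝓝[>] (0:ℝ)] fun t : ℝ => t ^ (-(s 0)) := by
    have : (fun t => ‖F t‖) = fun t => ‖Fr t‖ := by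
      funext t; simp [hF_def, Complex.norm_real]
    rw [← isBigO_norm_left, this, isBigO_norm_left]
    exact hFr_bot
  -- positivity of s 0
  have h0 : 0 < s 0 := by
    by_contra h0
    push_neg at h0
    obtain ⟨C, hC⟩ := isBigO_iff.mp hFr_bot
    have hb : ∀ᶠ t in 𝓝[>] (0:ℝ), Fr t ≤ |C| := by
      filter_upwards [hC, Ioc_mem_nhdsGT (zero_lt_one)] with t hCt ht
      have h1 : t ^ (-(s 0)) ≤ 1 := by
        apply Real.rpow_le_one ht.1.le ht.2
        linarith
      have h2 : ‖Fr t‖ = Fr t := abs_of_nonneg (hFr_nonneg t)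
      have h3 : ‖t ^ (-(s 0))‖ = t ^ (-(s 0)) := abs_of_nonneg (Real.rpow_nonneg ht.1.le _)
      rw [h2, h3] at hCt
      nlinarith [Real.rpow_nonneg ht.1.le (-(s 0)), le_abs_self C, abs_nonneg C]
    set N : ℕ := ⌈|C|⌉₊ + 1 with hN
    have hNC : (N : ℝ) > |C| := by
      have := Nat.le_ceil |C|
      push_cast [hN]
      linarith
    have htend : Tendsto (fun t : ℝ => ∑ n ∈ Finset.range N, Real.exp (-(t * lam n)))
        (𝓝[>] (0:ℝ)) (𝓝 (N : ℝ)) := by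
      have : Tendsto (fun t : ℝ => ∑ n ∈ Finset.range N, Real.exp (-(t * lam n)))
          (𝓝 (0:ℝ)) (𝓝 (∑ n ∈ Finset.range N, Real.exp (-(0 * lam n)))) := by
        apply tendsto_finset_sum
        intro n _
        exact (Continuous.tendsto (by continuity) 0)
      simp only [zero_mul, neg_zero, Real.exp_zero, Finset.sum_const, Finset.card_range,
        nsmul_eq_mul, mul_one] at this
      exact this.mono_left nhdsWithin_le_nhds
    have hev : ∀ᶠ t in 𝓝[>] (0:ℝ), (|C| : ℝ) < ∑ n ∈ Finset.range N, Real.exp (-(t * lam n)) :=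
      htend.eventually (eventually_gt_nhds hNC)
    obtain ⟨t, ht1, ht2⟩ := ((hb.and hev).and self_mem_nhdsWithin).exists
    have hle : ∑ n ∈ Finset.range N, Real.exp (-(t * lam n)) ≤ Fr t :=
      Summable.sum_le_tsum _ (fun n _ => (Real.exp_pos _).le) (hsum t ht2)
    linarith [ht1.1, ht1.2]
  -- local integrability and Mellin convergence
  have hF_loc : LocallyIntegrableOn F (Ioi 0) :=
    hF_cont.locallyIntegrableOn measurableSet_Ioi
  have hMC : ∀ z : ℂ, (s 0 : ℝ) < z.re → MellinConvergent F z := fun z hz =>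
    mellinConvergent_of_isBigO_rpow_exp (hlam_pos 0) hF_loc hF_top hF_bot hz
  -- summability of the Dirichlet series
  have hSummable : ∀ x : ℝ, s 0 < x → Summable fun n => 1 / lam n ^ x := by
    intro x hx
    have hx0 : (0 : ℝ) < x := h0.trans hx
    have hint : ∀ n, IntegrableOn (fun t => t ^ (x - 1) * Real.exp (-(lam n * t))) (Ioi 0) := by
      intro n
      have h1 := Real.GammaIntegral_convergent hx0
      rw [← mul_zero (lam n), ← integrableOn_Ioi_comp_mul_left_iff _ _ (hlam_pos n)] at h1
      refine IntegrableOn.congr_fun (h1.const_mul ((lam n ^ (x - 1))⁻¹))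
        (fun t ht => ?_) measurableSet_Ioi
      have ht0 : (0 : ℝ) < t := ht
      rw [Real.mul_rpow (hlam_pos n).le ht0.le]
      have : lam n ^ (x - 1) ≠ 0 := (Real.rpow_pos_of_pos (hlam_pos n) _).ne'
      field_simp
    have hmeas : ∀ n : ℕ, Measurable fun t : ℝ =>
        ENNReal.ofReal (t ^ (x - 1) * Real.exp (-(lam n * t))) := by
      intro n
      apply Measurable.ennreal_ofReal
      exact ((measurable_id.pow measurable_const).mul
        ((measurable_const.mul measurable_id).neg.exp))
    have hlin : ∀ n, ∫⁻ t in Ioi (0:ℝ),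
        ENNReal.ofReal (t ^ (x - 1) * Real.exp (-(lam n * t)))
        = ENNReal.ofReal ((1 / lam n) ^ x * Real.Gamma x) := by
      intro n
      rw [← ofReal_integral_eq_lintegral_ofReal (hint n)
        ((ae_restrict_iff' measurableSet_Ioi).mpr (ae_of_all _ (fun t ht => by
          have : (0:ℝ) < t := ht
          positivity)))]
      rw [Real.integral_rpow_mul_exp_neg_mul_Ioi hx0 (hlam_pos n)]
    have tonelli : ∑' n, (∫⁻ t in Ioi (0:ℝ),
        ENNReal.ofReal (t ^ (x - 1) * Real.exp (-(lam n * t))))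
        = ∫⁻ t in Ioi (0:ℝ), ENNReal.ofReal (t ^ (x - 1) * Fr t) := by
      rw [← lintegral_tsum (fun n => (hmeas n).aemeasurable)]
      refine setLIntegral_congr_fun measurableSet_Ioi (fun t ht => ?_)
      have ht0 : (0:ℝ) < t := ht
      have hrw : ∀ n, ENNReal.ofReal (t ^ (x-1) * Real.exp (-(lam n * t)))
          = ENNReal.ofReal (t ^ (x-1) * Real.exp (-(t * lam n))) := by
        intro n; rw [mul_comm (lam n) t]
      calc ∑' n, ENNReal.ofReal (t ^ (x-1) * Real.exp (-(lam n * t)))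
          = ∑' n, ENNReal.ofReal (t ^ (x-1) * Real.exp (-(t * lam n))) := tsum_congr hrw
        _ = ENNReal.ofReal (∑' n, t ^ (x-1) * Real.exp (-(t * lam n))) :=
            (ENNReal.ofReal_tsum_of_nonneg (fun n => by positivity)
              ((hsum t ht0).mul_left _)).symm
        _ = ENNReal.ofReal (t ^ (x-1) * Fr t) := by rw [tsum_mul_left]
    have hfin : ∫⁻ t in Ioi (0:ℝ), ENNReal.ofReal (t ^ (x - 1) * Fr t) < ⊤ := by
      have hMCx := hMC (x : ℂ) (by simpa using hx)
      have hfi : ∫⁻ t in Ioi (0:ℝ), ‖(t:ℂ) ^ ((x:ℂ) - 1) • F t‖₊ < ⊤ := hMCx.2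
      refine lt_of_le_of_lt (le_of_eq ?_) hfi
      refine setLIntegral_congr_fun measurableSet_Ioi (fun t ht => ?_)
      have ht0 : (0:ℝ) < t := ht
      have h1 : ‖(t:ℂ) ^ ((x:ℂ) - 1) • F t‖ = t ^ (x - 1) * Fr t := by
        rw [smul_eq_mul, norm_mul]
        rw [Complex.norm_cpow_eq_rpow_re_of_pos ht0]
        simp [hF_def, Complex.norm_real, abs_of_nonneg (hFr_nonneg t)]
      rw [← Real.enorm_eq_ofReal (mul_nonneg (Real.rpow_nonneg ht0.le _) (hFr_nonneg t)), ← h1,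
        enorm_norm, enorm_eq_nnnorm]
    have hne : ∑' n, ENNReal.ofReal ((1 / lam n) ^ x * Real.Gamma x) ≠ ⊤ := by
      simp_rw [← hlin]
      rw [tonelli]
      exact hfin.ne
    have hsum2 : Summable fun n => (1 / lam n) ^ x * Real.Gamma x := by
      have h4 := ENNReal.summable_toReal hne
      have h5 : ∀ n : ℕ, (ENNReal.ofReal ((1 / lam n) ^ x * Real.Gamma x)).toReal
          = (1 / lam n) ^ x * Real.Gamma x := by
        intro n
        refine ENNReal.toReal_ofReal ?_
        have := hlam_pos n
        positivity
      simpa only [h5] using h4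
    have h3 : (fun n => (1 / lam n) ^ x * Real.Gamma x)
        = fun n => Real.Gamma x * (1 / lam n ^ x) := by
      funext n
      rw [one_div, Real.inv_rpow (hlam_pos n).le, mul_comm, one_div]
    rw [h3] at hsum2
    exact (summable_mul_left_iff (Real.Gamma_pos_of_pos hx0).ne').mp hsum2
  -- Part 1: Gamma z * zeta z = mellin F z
  have part1 : ∀ z : ℂ, (s 0 : ℝ) < z.re → Complex.Gamma z * zeta z = mellin F z := by
    intro z hz
    have hz0 : 0 < z.re := h0.trans hz
    have hFhs : ∀ t ∈ Ioi (0:ℝ), HasSum (fun n => (1:ℂ) * Real.exp (-lam n * t)) (F t) := by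
      intro t ht
      have h1 : HasSum (fun n => Real.exp (-(t * lam n))) (Fr t) := (hsum t ht).hasSum
      have h2 : HasSum (fun n => ((Real.exp (-(t * lam n)) : ℝ) : ℂ)) (F t) :=
        Complex.hasSum_ofReal.mpr h1
      refine h2.congr_fun fun n => ?_
      rw [one_mul, mul_comm t (lam n), neg_mul]
    have hsum' : Summable fun n => ‖(1:ℂ)‖ / lam n ^ z.re := by
      simpa using hSummable z.re hz
    have hmel : HasSum (fun n => Complex.Gamma z * 1 / (lam n : ℂ) ^ z) (mellin F z) :=
      hasSum_mellin (fun i => Or.inr (hlam_pos i)) hz0 hFhs hsum'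
    rw [hzeta z hz, ← tsum_mul_left, ← hmel.tsum_eq]
    refine tsum_congr fun n => ?_
    rw [Complex.cpow_neg, mul_one, div_eq_mul_inv]
  -- set up part 2 data
  set P : ℝ → ℝ := fun t => ∑ i : Fin (k+1), c i * t ^ (-(s i.castSucc)) with hP_def
  set R : ℝ → ℝ := fun t => Fr t - P t with hR_def
  set f1 : ℝ → ℂ := (Ioc (0:ℝ) 1).indicator (fun t => ((R t : ℝ) : ℂ)) with hf1_def
  set f2 : ℝ → ℂ := (Ioi (1:ℝ)).indicator F with hf2_def
  have hP_cont : ContinuousOn P (Ioi 0) := by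
    refine continuousOn_finset_sum _ fun i _ => ?_
    exact continuousOn_const.mul
      (ContinuousOn.rpow_const continuousOn_id (fun t ht => Or.inl (ne_of_gt ht)))
  have hR_contC : ContinuousOn (fun t => ((R t : ℝ) : ℂ)) (Ioi 0) :=
    Complex.continuous_ofReal.comp_continuousOn (hFr_cont.sub hP_cont)
  have hf1_loc : LocallyIntegrableOn f1 (Ioi 0) := by
    refine (locallyIntegrableOn_iff isOpen_Ioi.isLocallyClosed).mpr fun K hK hKc => ?_
    rw [hf1_def, IntegrableOn, integrable_indicator_iff measurableSet_Ioc, IntegrableOn,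
      Measure.restrict_restrict measurableSet_Ioc]
    exact ((hR_contC.mono hK).integrableOn_compact hKc).mono_set inter_subset_right
  have hf2_loc : LocallyIntegrableOn f2 (Ioi 0) := by
    refine (locallyIntegrableOn_iff isOpen_Ioi.isLocallyClosed).mpr fun K hK hKc => ?_
    rw [hf2_def, IntegrableOn, integrable_indicator_iff measurableSet_Ioi, IntegrableOn,
      Measure.restrict_restrict measurableSet_Ioi]
    exact ((hF_cont.mono hK).integrableOn_compact hKc).mono_set inter_subset_right
  have hf1_top : ∀ a : ℝ, f1 =O[atTop] (· ^ (-a)) := by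
    intro a
    have hev : f1 =ᶠ[atTop] (fun _ => (0:ℂ)) := by
      filter_upwards [eventually_gt_atTop (1:ℝ)] with t ht
      exact indicator_of_notMem (fun hmem => absurd hmem.2 (not_le.mpr ht)) _
    exact hev.trans_isBigO (isBigO_zero _ _)
  have hf1_bot : f1 =O[𝓝[>] (0:ℝ)] (· ^ (-sk)) := by
    have hev : f1 =ᶠ[𝓝[>] (0:ℝ)] fun t => ((R t : ℝ) : ℂ) := by
      filter_upwards [Ioc_mem_nhdsGT zero_lt_one] with t ht
      exact indicator_of_mem ht _
    refine hev.trans_isBigO (Complex.isBigO_ofReal_left.mpr ?_)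
    exact htrace
  have hf2_bot : ∀ b : ℝ, f2 =O[𝓝[>] (0:ℝ)] (· ^ (-b)) := by
    intro b
    have hev : f2 =ᶠ[𝓝[>] (0:ℝ)] (fun _ => (0:ℂ)) := by
      filter_upwards [Ioc_mem_nhdsGT zero_lt_one] with t ht
      exact indicator_of_notMem (fun hmem => absurd ht.2 (not_le.mpr hmem)) _
    exact hev.trans_isBigO (isBigO_zero _ _)
  have hf2_top : f2 =O[atTop] fun t : ℝ => Real.exp (-(lam 0) * t) := by
    have hev : f2 =ᶠ[atTop] F := by
      filter_upwards [eventually_gt_atTop (1:ℝ)] with t ht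
      exact indicator_of_mem ht _
    exact hev.trans_isBigO hF_top
  have hGdiff : DifferentiableOn ℂ (fun z => mellin f1 z + mellin f2 z)
      {z : ℂ | sk < z.re} := by
    intro z hz
    have h1 : DifferentiableAt ℂ (mellin f1) z :=
      mellin_differentiableAt_of_isBigO_rpow hf1_loc (hf1_top (z.re + 1))
        (lt_add_one _) hf1_bot hz
    have h2 : DifferentiableAt ℂ (mellin f2) z :=
      mellin_differentiableAt_of_isBigO_rpow_exp (hlam_pos 0) hf2_loc hf2_top
        (hf2_bot (z.re - 1)) (sub_one_lt _)
    exact (h1.add h2).differentiableWithinAt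
  -- the three pieces of the Mellin transform, for s 0 < z.re
  have part2eq : ∀ z : ℂ, (s 0 : ℝ) < z.re → mellin F z =
      (mellin f1 z + mellin f2 z) + ∑ i : Fin (k+1), (c i : ℂ) / (z - (s i.castSucc : ℝ)) := by
    intro z hz
    have hIF : IntegrableOn (fun t : ℝ => (t:ℂ) ^ (z-1) • F t) (Ioi 0) := hMC z hz
    have hterm_int : ∀ i : Fin (k+1),
        IntegrableOn (fun t : ℝ => (t:ℂ) ^ (z - 1 - (s i.castSucc : ℝ))) (Ioc 0 1) := by
      intro i
      have h1 : IntervalIntegrable (fun t : ℝ => (t:ℂ) ^ (z - 1 - (s i.castSucc : ℝ)))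
          volume 0 1 := by
        apply intervalIntegral.intervalIntegrable_cpow'
        simp only [Complex.sub_re, Complex.one_re, Complex.ofReal_re]
        linarith [hsi_le i]
      rwa [intervalIntegrable_iff_integrableOn_Ioc_of_le zero_le_one] at h1
    have hPieq : EqOn (fun t : ℝ => (t:ℂ) ^ (z-1) • ((P t : ℝ) : ℂ))
        (fun t : ℝ => ∑ i : Fin (k+1), (c i : ℂ) * (t:ℂ) ^ (z - 1 - (s i.castSucc : ℝ)))
        (Ioc 0 1) := by
      intro t ht
      simp only [hP_def, smul_eq_mul, Complex.ofReal_sum, Complex.ofReal_mul, Finset.mul_sum]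
      refine Finset.sum_congr rfl fun i _ => ?_
      rw [Complex.ofReal_cpow ht.1.le,
        show z - 1 - (s i.castSucc : ℂ) = (z - 1) + (-(s i.castSucc) : ℝ) by push_cast; ring,
        Complex.cpow_add _ _ (Complex.ofReal_ne_zero.mpr ht.1.ne')]
      push_cast
      ring
    have hIP : IntegrableOn (fun t : ℝ => (t:ℂ) ^ (z-1) • ((P t : ℝ) : ℂ)) (Ioc 0 1) := by
      refine IntegrableOn.congr_fun ?_ hPieq.symm measurableSet_Ioc
      exact integrable_finset_sum _ fun i _ => (hterm_int i).const_mul _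
    have hIF1 : IntegrableOn (fun t : ℝ => (t:ℂ) ^ (z-1) • F t) (Ioc 0 1) :=
      hIF.mono_set Ioc_subset_Ioi_self
    have hIR : IntegrableOn (fun t : ℝ => (t:ℂ) ^ (z-1) • ((R t : ℝ) : ℂ)) (Ioc 0 1) := by
      refine IntegrableOn.congr_fun (hIF1.sub hIP) (fun t ht => ?_) measurableSet_Ioc
      simp only [hR_def, Complex.ofReal_sub, smul_eq_mul, hF_def, Pi.sub_apply]
      ring
    have hsplit : mellin F z = (∫ t in Ioc (0:ℝ) 1, (t:ℂ) ^ (z-1) • F t)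
        + ∫ t in Ioi (1:ℝ), (t:ℂ) ^ (z-1) • F t := by
      rw [mellin, ← Ioc_union_Ioi_eq_Ioi (zero_le_one (α := ℝ)),
        setIntegral_union (Ioc_disjoint_Ioi le_rfl) measurableSet_Ioi hIF1
          (hIF.mono_set (Ioi_subset_Ioi zero_le_one))]
    have hmf1 : mellin f1 z = ∫ t in Ioc (0:ℝ) 1, (t:ℂ) ^ (z-1) • ((R t : ℝ) : ℂ) := by
      rw [mellin]
      have hind : ∀ t : ℝ, (t:ℂ) ^ (z-1) • f1 t
          = (Ioc (0:ℝ) 1).indicator (fun t : ℝ => (t:ℂ) ^ (z-1) • ((R t : ℝ) : ℂ)) t := by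
        intro t
        rw [hf1_def]
        by_cases h : t ∈ Ioc (0:ℝ) 1
        · simp [indicator_of_mem h]
        · simp [indicator_of_notMem h]
      simp_rw [hind]
      rw [setIntegral_indicator measurableSet_Ioc,
        inter_eq_self_of_subset_right Ioc_subset_Ioi_self]
    have hmf2 : mellin f2 z = ∫ t in Ioi (1:ℝ), (t:ℂ) ^ (z-1) • F t := by
      rw [mellin]
      have hind : ∀ t : ℝ, (t:ℂ) ^ (z-1) • f2 t
          = (Ioi (1:ℝ)).indicator (fun t : ℝ => (t:ℂ) ^ (z-1) • F t) t := by
        intro t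
        rw [hf2_def]
        by_cases h : t ∈ Ioi (1:ℝ)
        · simp [indicator_of_mem h]
        · simp [indicator_of_notMem h]
      simp_rw [hind]
      rw [setIntegral_indicator measurableSet_Ioi,
        inter_eq_self_of_subset_right (Ioi_subset_Ioi zero_le_one)]
    have hpole : ∀ i : Fin (k+1), (∫ t in Ioc (0:ℝ) 1, (t:ℂ) ^ (z - 1 - (s i.castSucc : ℝ)))
        = 1 / (z - (s i.castSucc : ℝ)) := by
      intro i
      have hne : z - (s i.castSucc : ℝ) ≠ 0 := by
        intro h
        have := congrArg Complex.re h
        simp only [Complex.sub_re, Complex.ofReal_re, Complex.zero_re] at this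
        linarith [hsi_le i]
      rw [← intervalIntegral.integral_of_le zero_le_one,
        integral_cpow (Or.inl (by
          simp only [Complex.sub_re, Complex.one_re, Complex.ofReal_re]
          linarith [hsi_le i]))]
      rw [show z - 1 - (s i.castSucc : ℂ) + 1 = z - (s i.castSucc : ℝ) by push_cast; ring]
      rw [Complex.ofReal_one, Complex.one_cpow, Complex.ofReal_zero, Complex.zero_cpow hne]
      simp
    have hIocsum : (∫ t in Ioc (0:ℝ) 1, (t:ℂ) ^ (z-1) • F t)
        = (∫ t in Ioc (0:ℝ) 1, (t:ℂ) ^ (z-1) • ((R t : ℝ) : ℂ))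
          + ∑ i : Fin (k+1), (c i : ℂ) / (z - (s i.castSucc : ℝ)) := by
      have heq : EqOn (fun t : ℝ => (t:ℂ) ^ (z-1) • F t)
          (fun t : ℝ => (t:ℂ) ^ (z-1) • ((R t : ℝ) : ℂ)
            + ∑ i : Fin (k+1), (c i : ℂ) * (t:ℂ) ^ (z - 1 - (s i.castSucc : ℝ))) (Ioc 0 1) := by
        intro t ht
        have hFRP : F t = ((R t : ℝ) : ℂ) + ((P t : ℝ) : ℂ) := by
          rw [hF_def, hR_def]
          push_cast
          ring
        simp only
        rw [hFRP, smul_add]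
        exact congrArg (fun w => (t:ℂ) ^ (z-1) • ((R t : ℝ) : ℂ) + w) (hPieq ht)
      rw [setIntegral_congr_fun measurableSet_Ioc heq,
        integral_add hIR (integrable_finset_sum _ fun i _ => (hterm_int i).const_mul _),
        integral_finset_sum _ (fun i _ => (hterm_int i).const_mul _)]
      congr 1
      refine Finset.sum_congr rfl fun i _ => ?_
      rw [MeasureTheory.integral_const_mul, hpole i, mul_one_div]
    rw [hsplit, hIocsum, hmf1, hmf2]
    ring
  constructor
  · intro z hz
    rw [part1 z hz, mellin]
    simp_rw [smul_eq_mul]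
    rfl
  · refine ⟨fun z => mellin f1 z + mellin f2 z,
      (hGdiff.analyticOnNhd (isOpen_lt continuous_const Complex.continuous_re)).analyticOn,
      fun z hz => ?_⟩
    rw [part1 z hz, part2eq z hz]
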